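/- arXiv:1601.06752 — 7 statements merged into one kernel-verified Lean document; each statement's English description precedes it below -/
import Mathlib

section
/- If A and B are Hermitian operators with A² ≤ 1 and B² ≤ 1, then |{A,B}|² + |[A,B]|² ≤ 4·1, where {A,B} = AB + BA and [A,B] = AB − BA. -/
open Matrix ComplexOrder

/-- If `A` and `B` are Hermitian with `A² ≤ 1` and `B² ≤ 1`, then
`|{A,B}|² + |[A,B]|² ≤ 4·1`, where `|Z|² = Z†Z` and `≤` is the Loewner order. -/
theorem anticommutator_commutator_modulus_sq_le (n : ℕ)
    (A B : Matrix (Fin n) (Fin n) ℂ)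
    (hA : A.IsHermitian) (hB : B.IsHermitian)
    (hA1 : ((1 : Matrix (Fin n) (Fin n) ℂ) - A * A).PosSemidef)
    (hB1 : ((1 : Matrix (Fin n) (Fin n) ℂ) - B * B).PosSemidef) :
    ((4 : ℂ) • (1 : Matrix (Fin n) (Fin n) ℂ)
      - ((A * B + B * A)ᴴ * (A * B + B * A) + (A * B - B * A)ᴴ * (A * B - B * A))).PosSemidef := by
  have h4 : (4 : ℂ) • (1 : Matrix (Fin n) (Fin n) ℂ) = 1 + 1 + 1 + 1 := by
    ext i j; simp [Matrix.one_apply]; split <;> norm_num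
  have key : (4 : ℂ) • (1 : Matrix (Fin n) (Fin n) ℂ)
      - ((A * B + B * A)ᴴ * (A * B + B * A) + (A * B - B * A)ᴴ * (A * B - B * A))
      = ((1 - A * A) + Bᴴ * (1 - A * A) * B) + ((1 - B * B) + Aᴴ * (1 - B * B) * A)
      + (((1 - A * A) + Bᴴ * (1 - A * A) * B) + ((1 - B * B) + Aᴴ * (1 - B * B) * A)) := by
    rw [h4]
    simp only [conjTranspose_add, conjTranspose_sub, conjTranspose_mul, hA.eq, hB.eq]
    noncomm_ring
  rw [key]
  exact (((hA1.add (hA1.conjTranspose_mul_mul_same B)).add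
    (hB1.add (hB1.conjTranspose_mul_mul_same A))).add
    ((hA1.add (hA1.conjTranspose_mul_mul_same B)).add
    (hB1.add (hB1.conjTranspose_mul_mul_same A))))
end

section
/- With notation as in the CHSH–anticommutator bound, W² ≤ 4·(1⊗1) − [A₀,A₁]⊗[B₀,B₁], where W is the CHSH operator built from binary observables A₀, A₁, B₀, B₁. -/
open Matrix Kronecker ComplexOrder

lemma chsh_neg_kron {m n p q : Type*} (A : Matrix m n ℂ) (B : Matrix p q ℂ) :
    (-A) ⊗ₖ B = -(A ⊗ₖ B) := by
  ext ⟨i, j⟩ ⟨k, l⟩; simp [kroneckerMap_apply]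

lemma chsh_kron_neg {m n p q : Type*} (A : Matrix m n ℂ) (B : Matrix p q ℂ) :
    A ⊗ₖ (-B) = -(A ⊗ₖ B) := by
  ext ⟨i, j⟩ ⟨k, l⟩; simp [kroneckerMap_apply]

lemma chsh_kron_conjT {m n : Type*} (A : Matrix m m ℂ) (B : Matrix n n ℂ) :
    (A ⊗ₖ B)ᴴ = Aᴴ ⊗ₖ Bᴴ := by
  ext ⟨i, j⟩ ⟨k, l⟩
  simp [conjTranspose_apply, kroneckerMap_apply, star_mul', mul_comm]

lemma chsh_psd_kron {m n : ℕ} {A : Matrix (Fin m) (Fin m) ℂ} {B : Matrix (Fin n) (Fin n) ℂ}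
    (hA : A.PosSemidef) (hB : B.PosSemidef) : (A ⊗ₖ B).PosSemidef := by
  exact hA.kronecker hB

lemma chsh_sq_psd {n : ℕ} {H : Matrix (Fin n) (Fin n) ℂ} (h : H.IsHermitian) :
    (H * H).PosSemidef := by
  have := Matrix.posSemidef_conjTranspose_mul_self H
  rwa [h.eq] at this

/-- For binary observables `A₀, A₁` on `H_A` and `B₀, B₁` on `H_B`, the CHSH operator
`W = A₀⊗B₀ + A₀⊗B₁ + A₁⊗B₀ − A₁⊗B₁` satisfies
`W² ≤ 4·(1⊗1) − [A₀,A₁]⊗[B₀,B₁]` in the Loewner order. -/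
theorem chsh_operator_sq_le (nA nB : ℕ)
    (A₀ A₁ : Matrix (Fin nA) (Fin nA) ℂ) (B₀ B₁ : Matrix (Fin nB) (Fin nB) ℂ)
    (hA₀ : A₀.IsHermitian) (hA₁ : A₁.IsHermitian)
    (hB₀ : B₀.IsHermitian) (hB₁ : B₁.IsHermitian)
    (hA₀1 : ((1 : Matrix (Fin nA) (Fin nA) ℂ) - A₀ * A₀).PosSemidef)
    (hA₁1 : ((1 : Matrix (Fin nA) (Fin nA) ℂ) - A₁ * A₁).PosSemidef)
    (hB₀1 : ((1 : Matrix (Fin nB) (Fin nB) ℂ) - B₀ * B₀).PosSemidef)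
    (hB₁1 : ((1 : Matrix (Fin nB) (Fin nB) ℂ) - B₁ * B₁).PosSemidef)
    (W : Matrix (Fin nA × Fin nB) (Fin nA × Fin nB) ℂ)
    (hW : W = A₀ ⊗ₖ B₀ + A₀ ⊗ₖ B₁ + A₁ ⊗ₖ B₀ - A₁ ⊗ₖ B₁) :
    ((4 : ℂ) • ((1 : Matrix (Fin nA) (Fin nA) ℂ) ⊗ₖ (1 : Matrix (Fin nB) (Fin nB) ℂ))
      - (A₀ * A₁ - A₁ * A₀) ⊗ₖ (B₀ * B₁ - B₁ * B₀) - W * W).PosSemidef := by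
  subst hW
  have key : (4 : ℂ) • ((1 : Matrix (Fin nA) (Fin nA) ℂ) ⊗ₖ (1 : Matrix (Fin nB) (Fin nB) ℂ))
      - (A₀ * A₁ - A₁ * A₀) ⊗ₖ (B₀ * B₁ - B₁ * B₀)
      - (A₀ ⊗ₖ B₀ + A₀ ⊗ₖ B₁ + A₁ ⊗ₖ B₀ - A₁ ⊗ₖ B₁) *
        (A₀ ⊗ₖ B₀ + A₀ ⊗ₖ B₁ + A₁ ⊗ₖ B₀ - A₁ ⊗ₖ B₁)
    = (1 - A₀ * A₀) ⊗ₖ ((B₀ + B₁) * (B₀ + B₁))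
      + (1 - A₁ * A₁) ⊗ₖ ((B₀ - B₁) * (B₀ - B₁))
      + ((A₀ + A₁) * (A₀ + A₁) + (1 - A₀ * A₀) + (1 - A₁ * A₁)) ⊗ₖ (1 - B₀ * B₀)
      + ((A₀ - A₁) * (A₀ - A₁) + (1 - A₀ * A₀) + (1 - A₁ * A₁)) ⊗ₖ (1 - B₁ * B₁) := by
    simp only [sub_eq_add_neg, neg_add, mul_add, add_mul, mul_neg, neg_mul, neg_neg,
      mul_one, one_mul, Matrix.add_kronecker, Matrix.kronecker_add, chsh_neg_kron,
      chsh_kron_neg, ← Matrix.mul_kronecker_mul]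
    module
  rw [key]
  refine (((chsh_psd_kron hA₀1 (chsh_sq_psd (hB₀.add hB₁))).add
    (chsh_psd_kron hA₁1 (chsh_sq_psd (hB₀.sub hB₁)))).add
    (chsh_psd_kron (((chsh_sq_psd (hA₀.add hA₁)).add hA₀1).add hA₁1) hB₀1)).add
    (chsh_psd_kron (((chsh_sq_psd (hA₀.sub hA₁)).add hA₀1).add hA₁1) hB₁1)
end

section
/- Let ρ_{XYB} = Σ_{x,y} p_{xy} |x⟩⟨x| ⊗ |y⟩⟨y| ⊗ ρ_{xy} be a ccq-state on finite sets X, Y and a finite-dimensional system B. Then the guessing probability with postmeasurement information satisfies p_guess(X|B Y*) = sup over measurements {N_k} on B of p_guess(X|KY), where P(x,y,k) = p_{xy}·tr(N_k ρ_{xy}) and p_guess(X|B Y*) is the maximum over POVMs {M_f} indexed by functions f: Y → X of Σ_{x,y,f: x=f(y)} p_{xy}·tr(M_f ρ_{xy}). -/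
open Finset Matrix ComplexOrder

private lemma psd_trace_re_nonneg {d : ℕ} {A : Matrix (Fin d) (Fin d) ℂ}
    (hA : A.PosSemidef) : 0 ≤ A.trace.re := by
  have h : ∀ i, 0 ≤ (A i i).re := by
    intro i
    have := hA.re_dotProduct_nonneg (Pi.single i 1)
    simpa [dotProduct, mulVec, Pi.single_apply, Finset.sum_ite_eq] using this
  simpa [Matrix.trace, Matrix.diag, Complex.re_sum] using
    Finset.sum_nonneg fun i _ => h i

open scoped MatrixOrder in
private lemma trace_mul_re_nonneg {d : ℕ} {A B : Matrix (Fin d) (Fin d) ℂ}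
    (hA : A.PosSemidef) (hB : B.PosSemidef) : 0 ≤ ((A * B).trace).re := by
  have hS : (CFC.sqrt B).PosSemidef := (CFC.sqrt_nonneg B).posSemidef
  have h1 : (A * B).trace = ((CFC.sqrt B)ᴴ * A * CFC.sqrt B).trace := by
    conv_lhs => rw [← CFC.sqrt_mul_sqrt_self B hB.nonneg]
    rw [← mul_assoc, Matrix.trace_mul_comm, hS.1.eq, mul_assoc, ← mul_assoc]
  rw [h1]
  exact psd_trace_re_nonneg (hA.conjTranspose_mul_mul_same (CFC.sqrt B))

/-- The total weight of a POVM applied to the full ensemble is `1`. -/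
private lemma sum_trace_eq_one {𝒳 𝒴 ι : Type} [Fintype 𝒳] [Fintype 𝒴] [Fintype ι]
    {d : ℕ} (p : 𝒳 → 𝒴 → ℝ) (ρ : 𝒳 → 𝒴 → Matrix (Fin d) (Fin d) ℂ)
    (hp1 : ∑ x, ∑ y, p x y = 1) (hρtr : ∀ x y, (ρ x y).trace = 1)
    (W : ι → Matrix (Fin d) (Fin d) ℂ) (hW : ∑ i, W i = 1) :
    ∑ i, ∑ x, ∑ y, p x y * ((W i * ρ x y).trace).re = 1 := by
  rw [Finset.sum_comm]
  calc ∑ x, ∑ i, ∑ y, p x y * ((W i * ρ x y).trace).re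
      = ∑ x, ∑ y, ∑ i, p x y * ((W i * ρ x y).trace).re :=
        Finset.sum_congr rfl fun x _ => Finset.sum_comm
    _ = ∑ x, ∑ y, p x y * (((∑ i, W i) * ρ x y).trace).re := by
        refine Finset.sum_congr rfl fun x _ => Finset.sum_congr rfl fun y _ => ?_
        rw [Finset.sum_mul, Matrix.trace_sum, Complex.re_sum, Finset.mul_sum]
    _ = 1 := by
        rw [← hp1]
        refine Finset.sum_congr rfl fun x _ => Finset.sum_congr rfl fun y _ => ?_
        rw [hW, one_mul, hρtr, Complex.one_re, mul_one]

/-- Guessing with postmeasurement information: for a ccq-state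
`ρ_{XYB} = Σ_{x,y} p_{xy} |x⟩⟨x|⊗|y⟩⟨y|⊗ρ_{xy}`, the optimal guessing probability
with `Y` as postmeasurement information (maximum over POVMs indexed by functions
`f : Y → X` of `Σ_{x=f(y)} p_{xy} tr(M_f ρ_{xy})`) equals the supremum over all
measurements `{N_k}` on `B` of the classical guessing probability
`p_guess(X|KY) = Σ_{y,k} max_x p_{xy} tr(N_k ρ_{xy})`. -/
theorem pguess_postmeasurement_eq
    (𝒳 𝒴 : Type) [Fintype 𝒳] [Fintype 𝒴] [DecidableEq 𝒴] [Nonempty 𝒳] [Nonempty 𝒴]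
    (d : ℕ)
    (p : 𝒳 → 𝒴 → ℝ) (ρ : 𝒳 → 𝒴 → Matrix (Fin d) (Fin d) ℂ)
    (hp0 : ∀ x y, 0 ≤ p x y) (hp1 : ∑ x, ∑ y, p x y = 1)
    (hρ : ∀ x y, (ρ x y).PosSemidef) (hρtr : ∀ x y, (ρ x y).trace = 1) :
    sSup { r : ℝ | ∃ M : (𝒴 → 𝒳) → Matrix (Fin d) (Fin d) ℂ,
        (∀ f, (M f).PosSemidef) ∧ (∑ f, M f = 1) ∧
        r = ∑ f : 𝒴 → 𝒳, ∑ y, p (f y) y * ((M f * ρ (f y) y).trace).re }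
      = sSup { r : ℝ | ∃ (K : ℕ) (N : Fin K → Matrix (Fin d) (Fin d) ℂ),
        (∀ k, (N k).PosSemidef) ∧ (∑ k, N k = 1) ∧
        r = ∑ y, ∑ k, (univ.sup' univ_nonempty fun x => p x y * ((N k * ρ x y).trace).re) } := by
  classical
  set S1 : Set ℝ := { r : ℝ | ∃ M : (𝒴 → 𝒳) → Matrix (Fin d) (Fin d) ℂ,
        (∀ f, (M f).PosSemidef) ∧ (∑ f, M f = 1) ∧
        r = ∑ f : 𝒴 → 𝒳, ∑ y, p (f y) y * ((M f * ρ (f y) y).trace).re } with hS1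
  set S2 : Set ℝ := { r : ℝ | ∃ (K : ℕ) (N : Fin K → Matrix (Fin d) (Fin d) ℂ),
        (∀ k, (N k).PosSemidef) ∧ (∑ k, N k = 1) ∧
        r = ∑ y, ∑ k, (univ.sup' univ_nonempty fun x =>
          p x y * ((N k * ρ x y).trace).re) } with hS2
  -- S1 is nonempty
  have hne1 : S1.Nonempty := by
    refine ⟨_, fun f => if f = Classical.arbitrary (𝒴 → 𝒳) then 1 else 0, ?_, ?_, rfl⟩
    · intro f
      dsimp only
      split
      · exact Matrix.PosSemidef.one
      · exact Matrix.PosSemidef.zero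
    · simp
  -- S2 is nonempty
  have hne2 : S2.Nonempty := by
    refine ⟨_, 1, fun _ => 1, fun _ => Matrix.PosSemidef.one, by simp, rfl⟩
  -- S1 is bounded above by 1
  have hbdd1 : ∀ r ∈ S1, r ≤ 1 := by
    rintro r ⟨M, hM, hM1, rfl⟩
    have key : ∑ f : 𝒴 → 𝒳, ∑ y, p (f y) y * ((M f * ρ (f y) y).trace).re
        ≤ ∑ f : 𝒴 → 𝒳, ∑ x, ∑ y, p x y * ((M f * ρ x y).trace).re := by
      refine Finset.sum_le_sum fun f _ => ?_
      rw [Finset.sum_comm]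
      refine Finset.sum_le_sum fun y _ => ?_
      exact Finset.single_le_sum
        (fun x _ => mul_nonneg (hp0 x y) (trace_mul_re_nonneg (hM f) (hρ x y)))
        (Finset.mem_univ (f y))
    calc _ ≤ _ := key
      _ = 1 := sum_trace_eq_one p ρ hp1 hρtr M hM1
  -- S2 is bounded above by 1
  have hbdd2 : ∀ r ∈ S2, r ≤ 1 := by
    rintro r ⟨K, N, hN, hN1, rfl⟩
    have key : ∑ y, ∑ k, (univ.sup' univ_nonempty fun x =>
          p x y * ((N k * ρ x y).trace).re)
        ≤ ∑ y, ∑ k, ∑ x, p x y * ((N k * ρ x y).trace).re := by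
      refine Finset.sum_le_sum fun y _ => Finset.sum_le_sum fun k _ => ?_
      refine Finset.sup'_le _ _ fun x _ => ?_
      exact Finset.single_le_sum
        (fun x' _ => mul_nonneg (hp0 x' y) (trace_mul_re_nonneg (hN k) (hρ x' y)))
        (Finset.mem_univ x)
    have swap : ∑ y, ∑ k, ∑ x, p x y * ((N k * ρ x y).trace).re
        = ∑ k, ∑ x, ∑ y, p x y * ((N k * ρ x y).trace).re := by
      rw [Finset.sum_comm]
      refine Finset.sum_congr rfl fun k _ => ?_
      rw [Finset.sum_comm]
    calc _ ≤ _ := key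
      _ = _ := swap
      _ = 1 := sum_trace_eq_one p ρ hp1 hρtr N hN1
  refine le_antisymm (csSup_le hne1 ?_) (csSup_le hne2 ?_)
  · -- every element of S1 is at most some element of S2
    rintro r ⟨M, hM, hM1, rfl⟩
    set K := Fintype.card (𝒴 → 𝒳) with hK
    set e : Fin K ≃ (𝒴 → 𝒳) := (Fintype.equivFin (𝒴 → 𝒳)).symm with he
    set N : Fin K → Matrix (Fin d) (Fin d) ℂ := fun k => M (e k) with hNdef
    have hmem : (∑ y, ∑ k, (univ.sup' univ_nonempty fun x =>
        p x y * ((N k * ρ x y).trace).re)) ∈ S2 := by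
      refine ⟨K, N, fun k => hM (e k), ?_, rfl⟩
      rw [hNdef]
      rw [Equiv.sum_comp e M]
      exact hM1
    refine le_trans ?_ (le_csSup ⟨1, fun r hr => hbdd2 r hr⟩ hmem)
    have step1 : ∑ f : 𝒴 → 𝒳, ∑ y, p (f y) y * ((M f * ρ (f y) y).trace).re
        ≤ ∑ f : 𝒴 → 𝒳, ∑ y, (univ.sup' univ_nonempty fun x =>
          p x y * ((M f * ρ x y).trace).re) := by
      refine Finset.sum_le_sum fun f _ => Finset.sum_le_sum fun y _ => ?_
      exact Finset.le_sup' (fun x => p x y * ((M f * ρ x y).trace).re)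
        (Finset.mem_univ (f y))
    have step2 : ∑ f : 𝒴 → 𝒳, ∑ y, (univ.sup' univ_nonempty fun x =>
          p x y * ((M f * ρ x y).trace).re)
        = ∑ y, ∑ k, (univ.sup' univ_nonempty fun x =>
          p x y * ((N k * ρ x y).trace).re) := by
      rw [Finset.sum_comm]
      refine Finset.sum_congr rfl fun y _ => ?_
      exact (Equiv.sum_comp e fun f => (univ.sup' univ_nonempty fun x =>
        p x y * ((M f * ρ x y).trace).re)).symm
    exact step1.trans_eq step2
  · -- every element of S2 is an element of S1
    rintro r ⟨K, N, hN, hN1, rfl⟩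
    have hsel : ∀ (k : Fin K) (y : 𝒴), ∃ x : 𝒳,
        (univ.sup' univ_nonempty fun x => p x y * ((N k * ρ x y).trace).re)
          = p x y * ((N k * ρ x y).trace).re := by
      intro k y
      obtain ⟨x, -, hx⟩ := Finset.exists_mem_eq_sup' univ_nonempty
        (fun x => p x y * ((N k * ρ x y).trace).re)
      exact ⟨x, hx⟩
    choose g hg using hsel
    set gg : Fin K → (𝒴 → 𝒳) := fun k y => g k y with hgg
    set M : (𝒴 → 𝒳) → Matrix (Fin d) (Fin d) ℂ :=
      fun f => ∑ k ∈ univ.filter (fun k => gg k = f), N k with hMdef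
    have hmem : (∑ y, ∑ k, (univ.sup' univ_nonempty fun x =>
        p x y * ((N k * ρ x y).trace).re)) ∈ S1 := by
      refine ⟨M, ?_, ?_, ?_⟩
      · intro f
        exact Finset.sum_induction _ _ (fun a b ha hb => ha.add hb)
          Matrix.PosSemidef.zero (fun k _ => hN k)
      · rw [hMdef, Finset.sum_fiberwise_of_maps_to (fun k _ => Finset.mem_univ (gg k))]
        exact hN1
      · have comm : (∑ f : 𝒴 → 𝒳, ∑ y, p (f y) y * ((M f * ρ (f y) y).trace).re)
            = ∑ y, ∑ f : 𝒴 → 𝒳, p (f y) y * ((M f * ρ (f y) y).trace).re :=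
          Finset.sum_comm
        rw [comm]
        refine Finset.sum_congr rfl fun y _ => ?_
        have expand : ∀ f : 𝒴 → 𝒳, p (f y) y * ((M f * ρ (f y) y).trace).re
            = ∑ k ∈ univ.filter (fun k => gg k = f),
                p (f y) y * ((N k * ρ (f y) y).trace).re := by
          intro f
          rw [hMdef, Finset.sum_mul, Matrix.trace_sum, Complex.re_sum, Finset.mul_sum]
        calc ∑ k, (univ.sup' univ_nonempty fun x => p x y * ((N k * ρ x y).trace).re)
            = ∑ k, p (g k y) y * ((N k * ρ (g k y) y).trace).re :=
              Finset.sum_congr rfl fun k _ => hg k y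
          _ = ∑ f : 𝒴 → 𝒳, ∑ k ∈ univ.filter (fun k => gg k = f),
                p (gg k y) y * ((N k * ρ (gg k y) y).trace).re := by
              rw [Finset.sum_fiberwise_of_maps_to (fun k _ => Finset.mem_univ (gg k))]
          _ = ∑ f : 𝒴 → 𝒳, ∑ k ∈ univ.filter (fun k => gg k = f),
                p (f y) y * ((N k * ρ (f y) y).trace).re := by
              refine Finset.sum_congr rfl fun f _ => Finset.sum_congr rfl fun k hk => ?_
              rw [(Finset.mem_filter.mp hk).2]
          _ = ∑ f : 𝒴 → 𝒳, p (f y) y * ((M f * ρ (f y) y).trace).re :=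
              (Finset.sum_congr rfl fun f _ => (expand f).symm)
    exact le_csSup ⟨1, fun r hr => hbdd1 r hr⟩ hmem
end

section
/- There exists a joint distribution P_{X₁X₂Θ₂} on bits such that the ordinary guessing probability of (X₁,X₂) given Θ₂ equals 1/2, while the sequential guessing probability (where X₁ must be guessed before Θ₂ is revealed, i.e., max over constants c and functions g: {0,1} → {0,1} of Pr[X₁ = c ∧ X₂ = g(Θ₂)]) is at most 3/8. Hence sequential guessing is strictly suboptimal. -/
open Finset

noncomputable def Pd : Fin 2 → Fin 2 → Fin 2 → ℝ :=
  ![![![1/4, 0], ![1/8, 1/8]], ![![1/8, 1/8], ![0, 1/4]]]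

lemma Pd_le (θ x₁ x₂ : Fin 2) : Pd θ x₁ x₂ ≤ 1/4 := by
  fin_cases θ <;> fin_cases x₁ <;> fin_cases x₂ <;> norm_num [Pd]

/-- There is a joint distribution `P(θ₂, x₁, x₂)` on bits for which the ordinary guessing
probability of `(X₁, X₂)` given `Θ₂` equals `1/2`, while the sequential guessing
probability (where `X₁` must be guessed by a constant `c` before `Θ₂` is revealed)
is at most `3/8`: sequential guessing is strictly suboptimal. -/
theorem sequential_guessing_not_optimal :
    ∃ P : Fin 2 → Fin 2 → Fin 2 → ℝ,
      (∀ θ x₁ x₂, 0 ≤ P θ x₁ x₂) ∧ (∑ θ, ∑ x₁, ∑ x₂, P θ x₁ x₂ = 1) ∧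
      (univ.sup' univ_nonempty
        (fun fg : (Fin 2 → Fin 2) × (Fin 2 → Fin 2) =>
          ∑ θ, P θ (fg.1 θ) (fg.2 θ)) = 1 / 2) ∧
      (univ.sup' univ_nonempty
        (fun cg : Fin 2 × (Fin 2 → Fin 2) =>
          ∑ θ, P θ cg.1 (cg.2 θ)) ≤ 3 / 8) := by
  refine ⟨Pd, ?_, ?_, ?_, ?_⟩
  · intro θ x₁ x₂
    fin_cases θ <;> fin_cases x₁ <;> fin_cases x₂ <;> norm_num [Pd]
  · simp [Fin.sum_univ_two, Pd]
    norm_num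
  · apply le_antisymm
    · apply Finset.sup'_le
      intro fg _
      rw [Fin.sum_univ_two]
      have := Pd_le 0 (fg.1 0) (fg.2 0)
      have := Pd_le 1 (fg.1 1) (fg.2 1)
      linarith
    · have := Finset.le_sup' (b := ((id, id) : (Fin 2 → Fin 2) × (Fin 2 → Fin 2)))
        (fun fg : (Fin 2 → Fin 2) × (Fin 2 → Fin 2) =>
          ∑ θ, Pd θ (fg.1 θ) (fg.2 θ)) (Finset.mem_univ _)
      refine le_trans ?_ this
      simp [Fin.sum_univ_two, Pd]
      norm_num
  · apply Finset.sup'_le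
    intro cg _
    obtain ⟨c, g⟩ := cg
    rw [Fin.sum_univ_two]
    have h0 : g 0 = 0 ∨ g 0 = 1 := by omega
    have h1 : g 1 = 0 ∨ g 1 = 1 := by omega
    fin_cases c <;> rcases h0 with h0 | h0 <;> rcases h1 with h1 | h1 <;>
      simp only [h0, h1] <;> norm_num [Pd]
end

section
/- Define on 4-dimensional space the state ρ = ½(|0⟩⟨0| + |2⟩⟨2|) and observables A₀ = |0⟩⟨0| − |1⟩⟨1| + |2⟩⟨2| − |3⟩⟨3| and A₁ = |0⟩⟨0| − |1⟩⟨1| − |2⟩⟨2| + |3⟩⟨3|. Then the effective anticommutator ½ tr({A₀,A₁}ρ) equals 0 while the absolute effective anticommutator ½ tr(|{A₀,A₁}|ρ) equals 1. -/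
open Matrix ComplexOrder

/-- The positive semidefinite square root of a positive semidefinite matrix
(the definition Mathlib had in December 2024, since removed). -/
noncomputable def Matrix.PosSemidef.sqrt {n 𝕜 : Type*} [Fintype n] [DecidableEq n] [RCLike 𝕜]
    {A : Matrix n n 𝕜} (hA : A.PosSemidef) : Matrix n n 𝕜 :=
  hA.1.eigenvectorUnitary.1 * diagonal ((↑) ∘ (√·) ∘ hA.1.eigenvalues) *
  (star hA.1.eigenvectorUnitary : Matrix n n 𝕜)

lemma sqrt_diag_two_aux {A : Matrix (Fin 4) (Fin 4) ℂ} (hA : A.PosSemidef)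
    (h : (Matrix.diagonal ![2, 2, 2, 2] : Matrix (Fin 4) (Fin 4) ℂ) ^ 2 = A) :
    (Matrix.diagonal ![2, 2, 2, 2] : Matrix (Fin 4) (Fin 4) ℂ) = hA.sqrt := by
  have hA4 : A = (4:ℂ) • 1 := by
    rw [← h]; ext i j
    fin_cases i <;> fin_cases j <;> simp [pow_two, diagonal_apply, Matrix.one_apply] <;> norm_num
  have he : ∀ i, hA.1.eigenvalues i = 4 := by
    intro i
    have hv := hA.1.mulVec_eigenvectorBasis i
    have hne := hA.1.eigenvectorBasis.orthonormal.ne_zero i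
    have hv2 : ((4:ℂ) • (1 : Matrix (Fin 4) (Fin 4) ℂ)) *ᵥ (⇑(hA.1.eigenvectorBasis i) : Fin 4 → ℂ)
        = (hA.1.eigenvalues i : ℂ) • (⇑(hA.1.eigenvectorBasis i) : Fin 4 → ℂ) := by
      rw [← hA4]; exact hv
    simp only [smul_mulVec, one_mulVec] at hv2
    have h0 : ((4:ℂ) - (hA.1.eigenvalues i : ℂ)) • (⇑(hA.1.eigenvectorBasis i) : Fin 4 → ℂ) = 0 := by
      rw [sub_smul, hv2]; simp
    rcases smul_eq_zero.mp h0 with h1 | h1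
    · have := sub_eq_zero.mp h1
      exact_mod_cast this.symm
    · exact absurd (by ext j; exact congrFun h1 j) hne
  have hd : (RCLike.ofReal ∘ (√·) ∘ hA.1.eigenvalues : Fin 4 → ℂ) = fun _ => 2 := by
    funext i
    simp only [Function.comp_apply, he]
    have : √(4:ℝ) = 2 := by
      rw [show (4:ℝ) = 2 ^ 2 by norm_num, Real.sqrt_sq (by norm_num)]
    rw [this]; norm_num
  unfold Matrix.PosSemidef.sqrt
  rw [hd]
  have hU := Matrix.mem_unitaryGroup_iff.mp hA.1.eigenvectorUnitary.2
  rw [show (diagonal fun _ => (2:ℂ) : Matrix (Fin 4) (Fin 4) ℂ) = (2:ℂ) • 1 by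
    ext i j; simp [diagonal_apply, Matrix.one_apply]]
  rw [mul_smul_comm, mul_one, smul_mul_assoc]
  erw [hU]
  ext i j
  fin_cases i <;> fin_cases j <;> simp [diagonal_apply, Matrix.one_apply] <;> norm_num

/-- For `ρ = ½(|0⟩⟨0| + |2⟩⟨2|)`, `A₀ = diag(1,−1,1,−1)`, `A₁ = diag(1,−1,−1,1)` on `ℂ⁴`,
the effective anticommutator `½ tr({A₀,A₁}ρ)` equals `0`, while the absolute effective
anticommutator `½ tr(|{A₀,A₁}|ρ)` equals `1`, where `|Z| = √(Z†Z)`. -/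
theorem effective_anticommutator_vs_absolute :
    ∀ (ρ A₀ A₁ : Matrix (Fin 4) (Fin 4) ℂ),
      ρ = Matrix.diagonal ![1/2, 0, 1/2, 0] →
      A₀ = Matrix.diagonal ![1, -1, 1, -1] →
      A₁ = Matrix.diagonal ![1, -1, -1, 1] →
      (1 / 2 : ℂ) * ((A₀ * A₁ + A₁ * A₀) * ρ).trace = 0 ∧
      (1 / 2 : ℝ) *
        (((Matrix.posSemidef_conjTranspose_mul_self (A₀ * A₁ + A₁ * A₀)).sqrt * ρ).trace).re
        = 1 := by
  intro ρ A₀ A₁ hρ h0 h1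
  subst hρ h0 h1
  constructor
  · simp [Matrix.diagonal_mul_diagonal, Matrix.trace, Matrix.diag, Fin.sum_univ_four]
    ring
  · have hB : Matrix.PosSemidef (Matrix.diagonal ![2, 2, 2, 2] : Matrix (Fin 4) (Fin 4) ℂ) := by
      refine Matrix.PosSemidef.diagonal ?_
      intro i
      fin_cases i <;> norm_num
    have hsq : (Matrix.diagonal ![2, 2, 2, 2] : Matrix (Fin 4) (Fin 4) ℂ) ^ 2 =
        (Matrix.diagonal ![1, -1, 1, -1] * Matrix.diagonal ![1, -1, -1, 1] +
         Matrix.diagonal ![1, -1, -1, 1] * Matrix.diagonal ![1, -1, 1, -1])ᴴ *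
        (Matrix.diagonal ![1, -1, 1, -1] * Matrix.diagonal ![1, -1, -1, 1] +
         Matrix.diagonal ![1, -1, -1, 1] * Matrix.diagonal ![1, -1, 1, -1]) := by
      simp only [pow_two, Matrix.diagonal_mul_diagonal, ← Matrix.diagonal_add,
        Matrix.diagonal_conjTranspose]
      ext i j
      fin_cases i <;> fin_cases j <;> simp [Matrix.diagonal_apply] <;> norm_num
    have := sqrt_diag_two_aux (Matrix.posSemidef_conjTranspose_mul_self _) hsq
    rw [← this]
    simp [Matrix.diagonal_mul_diagonal, Matrix.trace, Matrix.diag, Fin.sum_univ_four]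
    norm_num
end

section
/- Fix q ∈ (0,1], γ ∈ [3/4,1], and for k ≥ 0 define α(q,γ,k) = max over admissible pairs (p_L,p_T) of [(1−q)p_L + q e^{k(1−γ)} p_T + q e^{−kγ}(1−p_T)], where the admissible pairs are parametrized by t ∈ [0,1] via p_L(t) = ½ + (1/(2√2))√(1+t) and p_T(t) = ½ + (1/(4√2))(√(1+t)+√(1−t)). If random variables X_l (defined below) satisfy the recursion Pr[X_{l+1} ≥ x ∧ H_{l+1}] = Pr[X_l ≥ x ∧ H_l](1−q)p_L + Pr[X_l ≥ x−(1−γ) ∧ H_l] q p_T + Pr[X_l ≥ x+γ ∧ H_l] q(1−p_T) with admissible (p_L,p_T) at each step and Pr[X₀ ≥ x ∧ H₀] ≤ e^{−kx} for all real x, then for all l ∈ ℕ and all real x, Pr[X_l ≥ x ∧ H_l] ≤ α(q,γ,k)^l · e^{−kx}. -/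
/-- Martingale-style recursion bound for the sequential attack. With
`p_L(t) = ½ + (1/(2√2))√(1+t)`, `p_T(t) = ½ + (1/(4√2))(√(1+t)+√(1−t))` for `t ∈ [0,1]`,
and `α(q,γ,k)` the supremum over admissible pairs of
`(1−q)p_L + q e^{k(1−γ)} p_T + q e^{−kγ}(1−p_T)`: if `Pr l x` (the probability of
`X_l ≥ x ∧ H_l`) is nonnegative, satisfies the one-step recursion with an admissible
pair at each step, and `Pr 0 x ≤ e^{−kx}`, then `Pr l x ≤ α^l e^{−kx}` for all `l, x`. -/
theorem sequential_recursion_bound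
    (q γ k : ℝ) (hq0 : 0 < q) (hq1 : q ≤ 1) (hγ0 : 3 / 4 ≤ γ) (hγ1 : γ ≤ 1) (hk : 0 ≤ k)
    (Pr : ℕ → ℝ → ℝ) (hPr0 : ∀ l x, 0 ≤ Pr l x)
    (pL pT : ℕ → ℝ)
    (hadm : ∀ l, ∃ t ∈ Set.Icc (0 : ℝ) 1,
      pL l = 1 / 2 + (1 / (2 * Real.sqrt 2)) * Real.sqrt (1 + t) ∧
      pT l = 1 / 2 + (1 / (4 * Real.sqrt 2)) * (Real.sqrt (1 + t) + Real.sqrt (1 - t)))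
    (hrec : ∀ l x, Pr (l + 1) x =
      Pr l x * ((1 - q) * pL l) + Pr l (x - (1 - γ)) * (q * pT l)
        + Pr l (x + γ) * (q * (1 - pT l)))
    (hbase : ∀ x : ℝ, Pr 0 x ≤ Real.exp (-k * x))
    (α : ℝ)
    (hα : α = sSup { r : ℝ | ∃ t ∈ Set.Icc (0 : ℝ) 1,
      r = (1 - q) * (1 / 2 + (1 / (2 * Real.sqrt 2)) * Real.sqrt (1 + t))
        + q * Real.exp (k * (1 - γ)) *
            (1 / 2 + (1 / (4 * Real.sqrt 2)) * (Real.sqrt (1 + t) + Real.sqrt (1 - t)))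
        + q * Real.exp (-k * γ) *
            (1 - (1 / 2 + (1 / (4 * Real.sqrt 2)) * (Real.sqrt (1 + t) + Real.sqrt (1 - t)))) }) :
    ∀ (l : ℕ) (x : ℝ), Pr l x ≤ α ^ l * Real.exp (-k * x) := by
  have s2pos : (0:ℝ) < Real.sqrt 2 := Real.sqrt_pos.mpr (by norm_num)
  -- basic bounds for t ∈ [0,1]
  have hpLb : ∀ t ∈ Set.Icc (0:ℝ) 1,
      0 ≤ 1 / 2 + (1 / (2 * Real.sqrt 2)) * Real.sqrt (1 + t) ∧
      1 / 2 + (1 / (2 * Real.sqrt 2)) * Real.sqrt (1 + t) ≤ 1 := by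
    rintro t ⟨ht0, ht1⟩
    have h1 : Real.sqrt (1 + t) ≤ Real.sqrt 2 := Real.sqrt_le_sqrt (by linarith)
    have h0 : 0 ≤ Real.sqrt (1 + t) := Real.sqrt_nonneg _
    constructor
    · positivity
    · have : (1 / (2 * Real.sqrt 2)) * Real.sqrt (1 + t) ≤ (1 / (2 * Real.sqrt 2)) * Real.sqrt 2 := by
        apply mul_le_mul_of_nonneg_left h1; positivity
      have h2 : (1 / (2 * Real.sqrt 2)) * Real.sqrt 2 = 1 / 2 := by
        field_simp
      linarith
  have hpTb : ∀ t ∈ Set.Icc (0:ℝ) 1,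
      0 ≤ 1 / 2 + (1 / (4 * Real.sqrt 2)) * (Real.sqrt (1 + t) + Real.sqrt (1 - t)) ∧
      1 / 2 + (1 / (4 * Real.sqrt 2)) * (Real.sqrt (1 + t) + Real.sqrt (1 - t)) ≤ 1 := by
    rintro t ⟨ht0, ht1⟩
    have h1 : Real.sqrt (1 + t) ≤ Real.sqrt 2 := Real.sqrt_le_sqrt (by linarith)
    have h1' : Real.sqrt (1 - t) ≤ Real.sqrt 2 := Real.sqrt_le_sqrt (by linarith)
    have h0 : 0 ≤ Real.sqrt (1 + t) := Real.sqrt_nonneg _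
    have h0' : 0 ≤ Real.sqrt (1 - t) := Real.sqrt_nonneg _
    constructor
    · positivity
    · have : (1 / (4 * Real.sqrt 2)) * (Real.sqrt (1 + t) + Real.sqrt (1 - t))
          ≤ (1 / (4 * Real.sqrt 2)) * (2 * Real.sqrt 2) := by
        apply mul_le_mul_of_nonneg_left (by linarith); positivity
      have h2 : (1 / (4 * Real.sqrt 2)) * (2 * Real.sqrt 2) = 1 / 2 := by
        field_simp; ring
      linarith
  set S := { r : ℝ | ∃ t ∈ Set.Icc (0 : ℝ) 1,
      r = (1 - q) * (1 / 2 + (1 / (2 * Real.sqrt 2)) * Real.sqrt (1 + t))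
        + q * Real.exp (k * (1 - γ)) *
            (1 / 2 + (1 / (4 * Real.sqrt 2)) * (Real.sqrt (1 + t) + Real.sqrt (1 - t)))
        + q * Real.exp (-k * γ) *
            (1 - (1 / 2 + (1 / (4 * Real.sqrt 2)) * (Real.sqrt (1 + t) + Real.sqrt (1 - t)))) } with hS
  have hbdd : BddAbove S := by
    refine ⟨(1 - q) + q * Real.exp (k * (1 - γ)) + q * Real.exp (-k * γ), ?_⟩
    rintro r ⟨t, ht, rfl⟩
    obtain ⟨hL0, hL1⟩ := hpLb t ht
    obtain ⟨hT0, hT1⟩ := hpTb t ht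
    have e1 : (0:ℝ) ≤ Real.exp (k * (1 - γ)) := (Real.exp_pos _).le
    have e2 : (0:ℝ) ≤ Real.exp (-k * γ) := (Real.exp_pos _).le
    have hq' : (0:ℝ) ≤ 1 - q := by linarith
    have a1 := mul_le_mul_of_nonneg_left hL1 hq'
    have a2 := mul_le_mul_of_nonneg_left hT1 (mul_nonneg hq0.le e1)
    have a3 := mul_le_mul_of_nonneg_left (by linarith : 1 - (1 / 2 + (1 / (4 * Real.sqrt 2)) * (Real.sqrt (1 + t) + Real.sqrt (1 - t))) ≤ 1) (mul_nonneg hq0.le e2)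
    nlinarith [a1, a2, a3]
  have hmemle : ∀ t ∈ Set.Icc (0:ℝ) 1,
      (1 - q) * (1 / 2 + (1 / (2 * Real.sqrt 2)) * Real.sqrt (1 + t))
        + q * Real.exp (k * (1 - γ)) *
            (1 / 2 + (1 / (4 * Real.sqrt 2)) * (Real.sqrt (1 + t) + Real.sqrt (1 - t)))
        + q * Real.exp (-k * γ) *
            (1 - (1 / 2 + (1 / (4 * Real.sqrt 2)) * (Real.sqrt (1 + t) + Real.sqrt (1 - t)))) ≤ α := by
    intro t ht
    rw [hα]
    exact le_csSup hbdd ⟨t, ht, rfl⟩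
  have hα0 : 0 ≤ α := by
    have h := hmemle 0 ⟨le_refl 0, zero_le_one⟩
    obtain ⟨hL0, _⟩ := hpLb 0 ⟨le_refl 0, zero_le_one⟩
    obtain ⟨hT0, hT1⟩ := hpTb 0 ⟨le_refl 0, zero_le_one⟩
    have e1 : (0:ℝ) ≤ Real.exp (k * (1 - γ)) := (Real.exp_pos _).le
    have e2 : (0:ℝ) ≤ Real.exp (-k * γ) := (Real.exp_pos _).le
    have hq' : (0:ℝ) ≤ 1 - q := by linarith
    nlinarith [mul_nonneg hq' hL0, mul_nonneg (mul_nonneg hq0.le e1) hT0,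
      mul_nonneg (mul_nonneg hq0.le e2) (by linarith : (0:ℝ) ≤ 1 - (1 / 2 + (1 / (4 * Real.sqrt 2)) * (Real.sqrt (1 + 0) + Real.sqrt (1 - 0))))]
  intro l
  induction l with
  | zero => intro x; simpa using hbase x
  | succ l ih =>
    intro x
    obtain ⟨t, ht, hpl, hpt⟩ := hadm l
    obtain ⟨hL0, hL1⟩ := hpLb t ht
    obtain ⟨hT0, hT1⟩ := hpTb t ht
    rw [hrec l x, hpl, hpt]
    have hαl : (0:ℝ) ≤ α ^ l := pow_nonneg hα0 l
    have hE : (0:ℝ) < Real.exp (-k * x) := Real.exp_pos _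
    have e1 : (0:ℝ) < Real.exp (k * (1 - γ)) := Real.exp_pos _
    have e2 : (0:ℝ) < Real.exp (-k * γ) := Real.exp_pos _
    have hq' : (0:ℝ) ≤ 1 - q := by linarith
    have hB : Pr l (x - (1 - γ)) ≤ α ^ l * (Real.exp (-k * x) * Real.exp (k * (1 - γ))) := by
      have := ih (x - (1 - γ))
      rwa [show -k * (x - (1 - γ)) = -k * x + k * (1 - γ) by ring, Real.exp_add] at this
    have hC : Pr l (x + γ) ≤ α ^ l * (Real.exp (-k * x) * Real.exp (-k * γ)) := by
      have := ih (x + γ)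
      rwa [show -k * (x + γ) = -k * x + -k * γ by ring, Real.exp_add] at this
    have hA := ih x
    set pl := 1 / 2 + (1 / (2 * Real.sqrt 2)) * Real.sqrt (1 + t) with hpl'
    set pt := 1 / 2 + (1 / (4 * Real.sqrt 2)) * (Real.sqrt (1 + t) + Real.sqrt (1 - t)) with hpt'
    have key : (1 - q) * pl + q * Real.exp (k * (1 - γ)) * pt + q * Real.exp (-k * γ) * (1 - pt) ≤ α :=
      hmemle t ht
    have step1 : Pr l x * ((1 - q) * pl) + Pr l (x - (1 - γ)) * (q * pt)
        + Pr l (x + γ) * (q * (1 - pt))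
        ≤ α ^ l * Real.exp (-k * x) *
          ((1 - q) * pl + q * Real.exp (k * (1 - γ)) * pt + q * Real.exp (-k * γ) * (1 - pt)) := by
      have t1 : Pr l x * ((1 - q) * pl) ≤ α ^ l * Real.exp (-k * x) * ((1 - q) * pl) :=
        mul_le_mul_of_nonneg_right hA (by positivity)
      have t2 : Pr l (x - (1 - γ)) * (q * pt)
          ≤ α ^ l * (Real.exp (-k * x) * Real.exp (k * (1 - γ))) * (q * pt) :=
        mul_le_mul_of_nonneg_right hB (by positivity)
      have t3 : Pr l (x + γ) * (q * (1 - pt))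
          ≤ α ^ l * (Real.exp (-k * x) * Real.exp (-k * γ)) * (q * (1 - pt)) := by
        apply mul_le_mul_of_nonneg_right hC
        have : (0:ℝ) ≤ 1 - pt := by linarith
        positivity
      have heq : α ^ l * Real.exp (-k * x) *
          ((1 - q) * pl + q * Real.exp (k * (1 - γ)) * pt + q * Real.exp (-k * γ) * (1 - pt))
          = α ^ l * Real.exp (-k * x) * ((1 - q) * pl)
            + α ^ l * (Real.exp (-k * x) * Real.exp (k * (1 - γ))) * (q * pt)
            + α ^ l * (Real.exp (-k * x) * Real.exp (-k * γ)) * (q * (1 - pt)) := by ring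
      rw [heq]
      linarith
    have step2 : α ^ l * Real.exp (-k * x) *
        ((1 - q) * pl + q * Real.exp (k * (1 - γ)) * pt + q * Real.exp (-k * γ) * (1 - pt))
        ≤ α ^ l * Real.exp (-k * x) * α :=
      mul_le_mul_of_nonneg_left key (by positivity)
    calc Pr l x * ((1 - q) * pl) + Pr l (x - (1 - γ)) * (q * pt) + Pr l (x + γ) * (q * (1 - pt))
        ≤ α ^ l * Real.exp (-k * x) * α := le_trans step1 step2
      _ = α ^ (l + 1) * Real.exp (-k * x) := by ring
end

section
/- Define A(k) = (1/(4√2))[2(1−q) + q e^{−kγ}(e^k − 1)], B(k) = q e^{−kγ}(e^k − 1)/(4√2), C(k) = (1−q)/2 + q e^{−kγ}(e^k + 1)/2, and g(k) = √(2(A(k)² + B(k)²)) + C(k), for fixed q ∈ (0,1) and γ ∈ (3/4,1]. Then g(0) = 1 and g'(0) = (3/4 − γ)q < 0; consequently there exists k > 0 with g(k) < 1. -/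
/-- For `0 < q < 1` and `3/4 < γ ≤ 1`, the function
`g(k) = √(2(A(k)² + B(k)²)) + C(k)` with
`A(k) = (1/(4√2))[2(1−q) + q e^{−kγ}(e^k − 1)]`, `B(k) = q e^{−kγ}(e^k − 1)/(4√2)`,
`C(k) = (1−q)/2 + q e^{−kγ}(e^k + 1)/2` satisfies `g(0) = 1` and `g′(0) = (3/4 − γ)q < 0`;
consequently there exists `k > 0` with `g(k) < 1`. -/
theorem decay_rate_below_one
    (q γ : ℝ) (hq0 : 0 < q) (hq1 : q < 1) (hγ0 : 3 / 4 < γ) (hγ1 : γ ≤ 1)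
    (A B C g : ℝ → ℝ)
    (hA : ∀ k, A k = (1 / (4 * Real.sqrt 2)) *
      (2 * (1 - q) + q * Real.exp (-k * γ) * (Real.exp k - 1)))
    (hB : ∀ k, B k = q * Real.exp (-k * γ) * (Real.exp k - 1) / (4 * Real.sqrt 2))
    (hC : ∀ k, C k = (1 - q) / 2 + q * Real.exp (-k * γ) * (Real.exp k + 1) / 2)
    (hg : ∀ k, g k = Real.sqrt (2 * ((A k) ^ 2 + (B k) ^ 2)) + C k) :
    g 0 = 1 ∧ HasDerivAt g ((3 / 4 - γ) * q) 0 ∧ (3 / 4 - γ) * q < 0 ∧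
      ∃ k > 0, g k < 1 := by
  have s2 : Real.sqrt 2 > 0 := Real.sqrt_pos.mpr (by norm_num)
  have s2sq : Real.sqrt 2 ^ 2 = 2 := Real.sq_sqrt (by norm_num)
  have hq1' : (0:ℝ) < 1 - q := by linarith
  -- values at 0
  have hA0 : A 0 = (1 - q) / (2 * Real.sqrt 2) := by
    rw [hA]; simp [Real.exp_zero]; field_simp; ring
  have hB0 : B 0 = 0 := by rw [hB]; simp [Real.exp_zero]
  have hC0 : C 0 = (1 - q) / 2 + q := by rw [hC]; simp [Real.exp_zero]; ring
  have hφ0 : 2 * ((A 0) ^ 2 + (B 0) ^ 2) = ((1 - q) / 2) ^ 2 := by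
    rw [hA0, hB0]
    field_simp
    ring_nf
    rw [s2sq]; ring
  have hsqrt0 : Real.sqrt (2 * ((A 0) ^ 2 + (B 0) ^ 2)) = (1 - q) / 2 := by
    rw [hφ0, Real.sqrt_sq (by linarith)]
  have hg0 : g 0 = 1 := by rw [hg, hsqrt0, hC0]; ring
  -- derivatives
  have hu : HasDerivAt (fun k : ℝ => q * Real.exp (-k * γ) * (Real.exp k - 1)) q 0 := by
    have h1 : HasDerivAt (fun k : ℝ => -k * γ) (-γ) 0 := by
      simpa using ((hasDerivAt_id (0:ℝ)).neg.mul_const γ)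
    have h2 := h1.exp
    have h3 : HasDerivAt (fun k : ℝ => Real.exp k - 1) (Real.exp 0) 0 :=
      (Real.hasDerivAt_exp 0).sub_const 1
    have := (h2.const_mul q).mul h3
    refine this.congr_deriv ?_
    simp [Real.exp_zero]
  have hv : HasDerivAt (fun k : ℝ => q * Real.exp (-k * γ) * (Real.exp k + 1))
      (q * (1 - 2 * γ)) 0 := by
    have h1 : HasDerivAt (fun k : ℝ => -k * γ) (-γ) 0 := by
      simpa using ((hasDerivAt_id (0:ℝ)).neg.mul_const γ)
    have h2 := h1.exp
    have h3 : HasDerivAt (fun k : ℝ => Real.exp k + 1) (Real.exp 0) 0 :=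
      (Real.hasDerivAt_exp 0).add_const 1
    have := (h2.const_mul q).mul h3
    refine this.congr_deriv ?_
    simp [Real.exp_zero]; ring
  have hAfun : A = fun k => (1 / (4 * Real.sqrt 2)) *
      (2 * (1 - q) + q * Real.exp (-k * γ) * (Real.exp k - 1)) := funext hA
  have hBfun : B = fun k => q * Real.exp (-k * γ) * (Real.exp k - 1) / (4 * Real.sqrt 2) :=
    funext hB
  have hCfun : C = fun k => (1 - q) / 2 + q * Real.exp (-k * γ) * (Real.exp k + 1) / 2 :=
    funext hC
  have hA' : HasDerivAt A ((1 / (4 * Real.sqrt 2)) * q) 0 := by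
    rw [hAfun]
    exact (hu.const_add (2 * (1 - q))).const_mul _
  have hB' : HasDerivAt B (q / (4 * Real.sqrt 2)) 0 := by
    rw [hBfun]
    exact hu.div_const _
  have hC' : HasDerivAt C (q * (1 - 2 * γ) / 2) 0 := by
    rw [hCfun]
    exact (hv.div_const 2).const_add _
  have hφ' : HasDerivAt (fun k => 2 * ((A k) ^ 2 + (B k) ^ 2))
      (2 * (2 * A 0 * ((1 / (4 * Real.sqrt 2)) * q) + 2 * B 0 * (q / (4 * Real.sqrt 2)))) 0 := by
    have := ((hA'.pow 2).add (hB'.pow 2)).const_mul 2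
    refine this.congr_deriv ?_
    ring
  have hφ0pos : 2 * ((A 0) ^ 2 + (B 0) ^ 2) ≠ 0 := by
    rw [hφ0]; positivity
  have hsq' := (Real.hasDerivAt_sqrt hφ0pos).comp 0 hφ'
  have hgder : HasDerivAt g ((3 / 4 - γ) * q) 0 := by
    have hgfun : g = fun k => Real.sqrt (2 * ((A k) ^ 2 + (B k) ^ 2)) + C k := funext hg
    rw [hgfun]
    have := hsq'.add hC'
    refine this.congr_deriv ?_
    rw [hsqrt0, hA0, hB0]
    field_simp
    ring_nf
    rw [s2sq]
    ring
  have hneg : (3 / 4 - γ) * q < 0 := by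
    have : 3 / 4 - γ < 0 := by linarith
    exact mul_neg_of_neg_of_pos this hq0
  refine ⟨hg0, hgder, hneg, ?_⟩
  have htend := hasDerivAt_iff_tendsto_slope.mp hgder
  have hev : ∀ᶠ k in nhdsWithin (0:ℝ) (Set.Ioi 0), slope g 0 k < 0 := by
    have h1 : ∀ᶠ k in nhdsWithin (0:ℝ) {0}ᶜ, slope g 0 k < 0 :=
      htend.eventually_lt_const hneg
    exact nhdsWithin_mono 0 (fun x hx => ne_of_gt hx) h1
  obtain ⟨k, hk, hks⟩ := (hev.and self_mem_nhdsWithin).exists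
  refine ⟨k, hks, ?_⟩
  have : (g k - g 0) / (k - 0) < 0 := by
    rwa [slope_def_field] at hk
  have hkpos : (0:ℝ) < k := hks
  have hnum : g k - g 0 < 0 := by
    by_contra h
    push_neg at h
    exact absurd (div_nonneg h (by linarith : (0:ℝ) ≤ k - 0)) (not_le.mpr this)
  linarith
end
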